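/- Let A = (Q, q₀, δ, F) be a simple (co-Büchi) linear weak alternating automaton with L(A) ≠ ∅. Then there exist a finite sequence s₀ … s_n of states (s_i ⊆ V), a finite run dag Δ = e₀ … e_n of A over s₀ … s_n with configurations c₀ … c_{n+1}, and some k ≤ n such that c_k = c_{n+1} and for every q ∈ F there is some j with k ≤ j ≤ n and q ∉ c_j. -/

import Mathlib

/-- Transition formulas over atomic propositions `V` and locations `Q`:
propositional formulas built from `true`, `false`, literals `v` / `¬v`,
atoms `q ∈ Q` (occurring only positively), conjunction and disjunction. -/
inductive TransForm (V Q : Type) : Type where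
  | tt : TransForm V Q
  | ff : TransForm V Q
  | pos : V → TransForm V Q
  | neg : V → TransForm V Q
  | atom : Q → TransForm V Q
  | and : TransForm V Q → TransForm V Q → TransForm V Q
  | or : TransForm V Q → TransForm V Q → TransForm V Q

/-- Satisfaction of a transition formula by a pair `(s, X)` with `s ⊆ V`, `X ⊆ Q`. -/
def TransForm.sat {V Q : Type} (s : Set V) (X : Set Q) : TransForm V Q → Prop
  | .tt => True
  | .ff => False
  | .pos v => v ∈ s
  | .neg v => v ∉ s
  | .atom q => q ∈ X
  | .and f g => f.sat s X ∧ g.sat s X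
  | .or f g => f.sat s X ∨ g.sat s X

/-- `f.occurs q` holds iff location `q` occurs in the transition formula `f`. -/
def TransForm.occurs {V Q : Type} (q : Q) : TransForm V Q → Prop
  | .atom q' => q' = q
  | .and f g => f.occurs q ∨ g.occurs q
  | .or f g => f.occurs q ∨ g.occurs q
  | _ => False

/-- A (co-Büchi) linear weak alternating automaton over propositions `V` and
locations `Q`: initial location, transition function, co-final set `F`, and the
requirement that `q' ⪯ q ↔ q →* q'` is a partial order (reflexivity and
transitivity are automatic; antisymmetry is the actual condition). -/
structure LWAA (V Q : Type) where
  init : Q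
  delta : Q → TransForm V Q
  final : Set Q
  antisymm : ∀ q q' : Q,
    Relation.ReflTransGen (fun a b => (delta a).occurs b) q q' →
    Relation.ReflTransGen (fun a b => (delta a).occurs b) q' q → q = q'

namespace LWAA

variable {V Q : Type}

/-- The configurations `c₀ c₁ …` determined by a sequence of edge sets:
`c₀ = {q₀}` and `c_{i+1} = e_i(c_i)`. -/
def configs (A : LWAA V Q) (e : ℕ → Set (Q × Q)) : ℕ → Set Q
  | 0 => {A.init}
  | i + 1 => {q' | ∃ q ∈ A.configs e i, (q, q') ∈ e i}

/-- `Δ = e₀e₁…` is a run dag of `A` over the temporal structure `σ`. -/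
def IsRunDag (A : LWAA V Q) (σ : ℕ → Set V) (e : ℕ → Set (Q × Q)) : Prop :=
  ∀ i : ℕ,
    (∀ p ∈ e i, p.1 ∈ A.configs e i) ∧
    (∀ p ∈ e i, (A.delta p.1).occurs p.2) ∧
    (∀ q ∈ A.configs e i, (A.delta q).sat (σ i) {q' | (q, q') ∈ e i})

/-- `e₀ … e_n` is a finite run dag of `A` over the finite sequence of states
`s₀ … s_n` (only the values for indices `≤ n` are relevant). -/
def IsFinRunDag (A : LWAA V Q) (s : ℕ → Set V) (e : ℕ → Set (Q × Q)) (n : ℕ) : Prop :=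
  ∀ i ≤ n,
    (∀ p ∈ e i, p.1 ∈ A.configs e i) ∧
    (∀ p ∈ e i, (A.delta p.1).occurs p.2) ∧
    (∀ q ∈ A.configs e i, (A.delta q).sat (s i) {q' | (q, q') ∈ e i})

/-- A path of the run dag given by the edges `e`. -/
def IsPath (A : LWAA V Q) (e : ℕ → Set (Q × Q)) (p : ℕ → Q) : Prop :=
  p 0 = A.init ∧ ∀ i : ℕ, (p i, p (i + 1)) ∈ e i

/-- Co-Büchi acceptance: every path visits `F` only finitely often. -/
def Accepting (A : LWAA V Q) (e : ℕ → Set (Q × Q)) : Prop :=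
  ∀ p : ℕ → Q, A.IsPath e p → {i : ℕ | p i ∈ A.final}.Finite

/-- The language of `A`: temporal structures admitting an accepting run dag. -/
def Lang (A : LWAA V Q) : Set (ℕ → Set V) :=
  {σ | ∃ e : ℕ → Set (Q × Q), A.IsRunDag σ e ∧ A.Accepting e}

/-- An LWAA is simple if whenever a co-final location `q` can be activated
from `q'` while being exited in the same transition, `q'` has an alternative
transition avoiding `q`. -/
def Simple (A : LWAA V Q) : Prop :=
  ∀ q ∈ A.final, ∀ q' : Q, ∀ s : Set V, ∀ X Y : Set Q,
    q ∉ X → q ∉ Y →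
    (A.delta q').sat s (X ∪ {q}) → (A.delta q).sat s Y →
    (A.delta q').sat s (X ∪ Y)

end LWAA

namespace LWAAProof

open LWAA

variable {V Q : Type}

lemma sat_mono {s : Set V} {X Y : Set Q} (h : X ⊆ Y) :
    ∀ {f : TransForm V Q}, f.sat s X → f.sat s Y := by
  intro f
  induction f with
  | tt => exact fun _ => trivial
  | ff => exact fun hf => hf.elim
  | pos v => exact id
  | neg v => exact id
  | atom q => exact fun hq => h hq
  | and f g ihf ihg => exact fun hf => ⟨ihf hf.1, ihg hf.2⟩
  | or f g ihf ihg => exact fun hf => hf.elim (fun h1 => Or.inl (ihf h1)) (fun h2 => Or.inr (ihg h2))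

lemma sat_inter_occurs {s : Set V} {X : Set Q} :
    ∀ {f : TransForm V Q}, f.sat s X → f.sat s (X ∩ {q | f.occurs q}) := by
  intro f
  induction f with
  | tt => exact fun _ => trivial
  | ff => exact fun hf => hf.elim
  | pos v => exact id
  | neg v => exact id
  | atom q => exact fun hq => ⟨hq, rfl⟩
  | and f g ihf ihg =>
      exact fun hf =>
        ⟨sat_mono (Set.inter_subset_inter_right _ (fun t ht => Or.inl ht)) (ihf hf.1),
         sat_mono (Set.inter_subset_inter_right _ (fun t ht => Or.inr ht)) (ihg hf.2)⟩
  | or f g ihf ihg =>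
      rintro (h1 | h2)
      · exact Or.inl (sat_mono (Set.inter_subset_inter_right _ (fun t ht => Or.inl ht)) (ihf h1))
      · exact Or.inr (sat_mono (Set.inter_subset_inter_right _ (fun t ht => Or.inr ht)) (ihg h2))

lemma exists_maximal_reach (A : LWAA V Q) {S : Finset Q} (hS : S.Nonempty) :
    ∃ r ∈ S, ∀ t ∈ S,
      Relation.ReflTransGen (fun a b => (A.delta a).occurs b) t r →
      Relation.ReflTransGen (fun a b => (A.delta a).occurs b) r t := by
  letI : PartialOrder Q :=
    { le := fun a b => Relation.ReflTransGen (fun x y => (A.delta x).occurs y) b a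
      le_refl := fun a => Relation.ReflTransGen.refl
      le_trans := fun a b c hab hbc => Relation.ReflTransGen.trans hbc hab
      le_antisymm := fun a b hab hba => A.antisymm a b hba hab }
  obtain ⟨r, hrS, hmax⟩ := S.exists_maximal hS
  refine ⟨r, hrS, fun t htS hle => ?_⟩
  by_contra hnot
  exact hnot (hmax htS hle)

lemma redirect (A : LWAA V Q) (hsimple : A.Simple) (s : Set V) (R : Set Q) (E : Q → Set Q)
    (hR : ∀ r ∈ R, r ∈ A.final ∧ (A.delta r).sat s (E r) ∧ r ∉ E r ∧
          ∀ t ∈ E r, (A.delta r).occurs t) :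
    ∀ (S : Finset Q),
      (∀ r ∈ S, ∀ t ∈ R,
          Relation.ReflTransGen (fun a b => (A.delta a).occurs b) r t → t ∈ S) →
      ∀ (q' : Q) (X : Set Q), (A.delta q').sat s X → X ∩ R ⊆ ↑S →
      ∃ X', (A.delta q').sat s X' ∧ X' ∩ R = ∅ ∧ X' ⊆ (X \ R) ∪ ⋃ r ∈ R, E r := by
  classical
  intro S
  induction S using Finset.strongInduction with
  | _ S ih =>
    intro hdown q' X hsat hXR
    by_cases hempty : X ∩ R = ∅
    · exact ⟨X, hsat, hempty,
        fun t ht => Or.inl ⟨ht, fun htR => Set.eq_empty_iff_forall_notMem.mp hempty t ⟨ht, htR⟩⟩⟩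
    · obtain ⟨x, hx⟩ := Set.nonempty_iff_ne_empty.mpr hempty
      have hSne : S.Nonempty := ⟨x, hXR hx⟩
      obtain ⟨r, hrS, hmax⟩ := exists_maximal_reach A hSne
      -- S.erase r is still downward closed within R
      have hdown' : ∀ a ∈ S.erase r, ∀ t ∈ R,
          Relation.ReflTransGen (fun x y => (A.delta x).occurs y) a t → t ∈ S.erase r := by
        intro a haS' t htR hreach
        have haS : a ∈ S := Finset.mem_of_mem_erase haS'
        have har : a ≠ r := Finset.ne_of_mem_erase haS'
        have htS : t ∈ S := hdown a haS t htR hreach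
        refine Finset.mem_erase.mpr ⟨?_, htS⟩
        intro htr
        subst htr
        exact har (A.antisymm t a (hmax a haS hreach) hreach).symm
      by_cases hrXR : r ∈ X ∩ R
      · obtain ⟨hrF, hsatE, hrE, hocc⟩ := hR r hrXR.2
        have hXeq : (X \ {r}) ∪ {r} = X :=
          Set.diff_union_of_subset (Set.singleton_subset_iff.mpr hrXR.1)
        have hsat2 : (A.delta q').sat s ((X \ {r}) ∪ {r}) := by rw [hXeq]; exact hsat
        have hsat1 : (A.delta q').sat s ((X \ {r}) ∪ E r) :=
          hsimple r hrF q' s (X \ {r}) (E r) (fun h => h.2 rfl) hrE hsat2 hsatE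
        have hX1R : ((X \ {r}) ∪ E r) ∩ R ⊆ ↑(S.erase r) := by
          rintro t ⟨(⟨htX, htr⟩ | htE), htR⟩
          · exact Finset.mem_coe.mpr (Finset.mem_erase.mpr
              ⟨fun h => htr (h ▸ rfl), hXR ⟨htX, htR⟩⟩)
          · have hreach : Relation.ReflTransGen (fun x y => (A.delta x).occurs y) r t :=
              Relation.ReflTransGen.single (hocc t htE)
            have htS : t ∈ S := hdown r hrS t htR hreach
            refine Finset.mem_coe.mpr (Finset.mem_erase.mpr ⟨?_, htS⟩)
            intro htr
            subst htr
            exact hrE htE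
        obtain ⟨X', hsat', hdisj', hsub'⟩ :=
          ih (S.erase r) (Finset.erase_ssubset hrS) hdown' q' ((X \ {r}) ∪ E r) hsat1 hX1R
        refine ⟨X', hsat', hdisj', fun t ht => ?_⟩
        rcases hsub' ht with (⟨(⟨htX, _⟩ | htE), htR⟩ | hU)
        · exact Or.inl ⟨htX, htR⟩
        · exact Or.inr (Set.mem_biUnion hrXR.2 htE)
        · exact Or.inr hU
      · have hXR' : X ∩ R ⊆ ↑(S.erase r) := by
          intro t ht
          refine Finset.mem_coe.mpr (Finset.mem_erase.mpr ⟨?_, hXR ht⟩)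
          intro htr
          exact hrXR (htr ▸ ht)
        exact ih (S.erase r) (Finset.erase_ssubset hrS) hdown' q' X hsat hXR'

lemma exists_finpath (A : LWAA V Q) (e : ℕ → Set (Q × Q)) :
    ∀ (N : ℕ) (q : Q), q ∈ A.configs e N →
    ∃ p : ℕ → Q, p 0 = A.init ∧ (∀ i, i < N → (p i, p (i + 1)) ∈ e i) ∧ p N = q := by
  intro N
  induction N with
  | zero =>
      intro q hq
      exact ⟨fun _ => q, hq, fun i h => absurd h (Nat.not_lt_zero i), rfl⟩
  | succ N ihN =>
      intro q hq
      obtain ⟨q'', hq'', hedge⟩ := hq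
      obtain ⟨p, hp0, hpe, hpN⟩ := ihN q'' hq''
      refine ⟨fun i => if i ≤ N then p i else q, ?_, ?_, ?_⟩
      · simp only [Nat.zero_le, if_pos]; exact hp0
      · intro i hi
        rcases Nat.lt_succ_iff_lt_or_eq.mp hi with h | h
        · have h1 : i ≤ N := le_of_lt h
          have h2 : i + 1 ≤ N := h
          simp only [h1, h2, if_pos]
          exact hpe i h
        · subst h
          simp only [le_refl, if_pos, Nat.not_succ_le_self, if_neg, hpN]
          exact hedge
      · show (if N + 1 ≤ N then p (N+1) else q) = q
        rw [if_neg (Nat.not_succ_le_self N)]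

def configAux (A : LWAA V Q) (E' : ℕ → Q → Set Q) : ℕ → Set Q
  | 0 => {A.init}
  | i + 1 => {q'' | ∃ q' ∈ configAux A E' i, q'' ∈ E' i q'}

def edgeAux (A : LWAA V Q) (E' : ℕ → Q → Set Q) (i : ℕ) : Set (Q × Q) :=
  {p | p.1 ∈ configAux A E' i ∧ p.2 ∈ E' i p.1}

lemma configs_edgeAux (A : LWAA V Q) (E' : ℕ → Q → Set Q) :
    ∀ i, A.configs (edgeAux A E') i = configAux A E' i := by
  intro i
  induction i with
  | zero => rfl
  | succ i ih =>
      ext t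
      show (∃ q ∈ A.configs (edgeAux A E') i, (q, t) ∈ edgeAux A E' i) ↔
        ∃ q' ∈ configAux A E' i, t ∈ E' i q'
      rw [ih]
      constructor
      · rintro ⟨q, hq, _, ht⟩; exact ⟨q, hq, ht⟩
      · rintro ⟨q, hq, ht⟩; exact ⟨q, hq, hq, ht⟩

end LWAAProof
/-- **Theorem 2, "only if" direction.** If `A` is a simple LWAA with
`L(A) ≠ ∅`, then there are a finite sequence of states `s₀ … s_n`, a finite run
dag `e₀ … e_n` of `A` over it with configurations `c₀ … c_{n+1}`, and `k ≤ n`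
such that `c_k = c_{n+1}` and every `q ∈ F` satisfies `q ∉ c_j` for some
`k ≤ j ≤ n`. -/
theorem simple_lwaa_nonempty_lasso {V Q : Type} [Fintype V] [Fintype Q]
    (A : LWAA V Q) (hsimple : A.Simple) (hne : A.Lang.Nonempty) :
    ∃ (n : ℕ) (s : ℕ → Set V) (e : ℕ → Set (Q × Q)) (k : ℕ),
      A.IsFinRunDag s e n ∧ k ≤ n ∧
      A.configs e k = A.configs e (n + 1) ∧
      (∀ q ∈ A.final, ∃ j : ℕ, k ≤ j ∧ j ≤ n ∧ q ∉ A.configs e j) := by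
  classical
  obtain ⟨σ, e, hrun, hacc⟩ := hne
  have key : ∀ (i : ℕ) (q' : Q), ∃ X : Set Q,
      (∀ t ∈ X, (A.delta q').occurs t) ∧
      X ⊆ A.configs e (i + 1) ∧
      (∀ t ∈ X, ¬(t ∈ A.final ∧ t ∈ A.configs e i ∧ (t, t) ∉ e i)) ∧
      (q' ∈ A.configs e i → (A.delta q').sat (σ i) X) := by
    intro i q'
    by_cases hq' : q' ∈ A.configs e i
    · set R : Set Q := {t | t ∈ A.final ∧ t ∈ A.configs e i ∧ (t, t) ∉ e i} with hRdef
      set E : Q → Set Q := fun q => {t | (q, t) ∈ e i} with hEdef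
      have hRprop : ∀ r ∈ R, r ∈ A.final ∧ (A.delta r).sat (σ i) (E r) ∧ r ∉ E r ∧
          ∀ t ∈ E r, (A.delta r).occurs t := by
        intro r hr
        exact ⟨hr.1, (hrun i).2.2 r hr.2.1, hr.2.2, fun t ht => (hrun i).2.1 (r, t) ht⟩
      obtain ⟨X', hsat', hdisj', hsub'⟩ :=
        LWAAProof.redirect A hsimple (σ i) R E hRprop Finset.univ
          (fun r _ t _ _ => Finset.mem_univ t) q' (E q') ((hrun i).2.2 q' hq')
          (fun t _ => Finset.mem_coe.mpr (Finset.mem_univ t))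
      refine ⟨X' ∩ {t | (A.delta q').occurs t}, fun t ht => ht.2, ?_, ?_,
        fun _ => LWAAProof.sat_inter_occurs hsat'⟩
      · intro t ht
        rcases hsub' ht.1 with h | h
        · exact ⟨q', hq', h.1⟩
        · obtain ⟨r, hrR, htr⟩ := Set.mem_iUnion₂.mp h
          exact ⟨r, hrR.2.1, htr⟩
      · intro t ht htR
        exact Set.eq_empty_iff_forall_notMem.mp hdisj' t ⟨ht.1, htR⟩
    · exact ⟨∅, fun t ht => ht.elim, Set.empty_subset _, fun t ht => ht.elim,
        fun h => absurd h hq'⟩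
  choose E' hocc hsub hRgone hsat using key
  set e' : ℕ → Set (Q × Q) := LWAAProof.edgeAux A E' with he'
  have hconf : ∀ i, A.configs e' i = LWAAProof.configAux A E' i :=
    LWAAProof.configs_edgeAux A E'
  have hsubconf : ∀ i, LWAAProof.configAux A E' i ⊆ A.configs e i := by
    intro i
    induction i with
    | zero => exact fun q hq => hq
    | succ i ih =>
        rintro q ⟨q', hq', hqE⟩
        exact hsub i q' hqE
  have hrd : ∀ i,
      (∀ p ∈ e' i, p.1 ∈ A.configs e' i) ∧
      (∀ p ∈ e' i, (A.delta p.1).occurs p.2) ∧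
      (∀ q ∈ A.configs e' i, (A.delta q).sat (σ i) {q' | (q, q') ∈ e' i}) := by
    intro i
    refine ⟨fun p hp => ?_, fun p hp => hocc i p.1 p.2 hp.2, fun q hq => ?_⟩
    · rw [hconf]; exact hp.1
    · rw [hconf] at hq
      have hset : {q' | (q, q') ∈ e' i} = E' i q := by
        ext t
        constructor
        · exact fun ht => ht.2
        · exact fun ht => ⟨hq, ht⟩
      rw [hset]
      exact hsat i q (hsubconf i hq)
  have habsent : ∀ q ∈ A.final, ∀ N : ℕ, ∃ i, N ≤ i ∧ q ∉ LWAAProof.configAux A E' i := by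
    intro q hqF N
    by_contra hcon
    push_neg at hcon
    have hin : ∀ i, N ≤ i → q ∈ LWAAProof.configAux A E' i := fun i hi => hcon i hi
    have hself : ∀ i, N ≤ i → (q, q) ∈ e i := by
      intro i hi
      obtain ⟨q'', _, hq''E⟩ := hin (i + 1) (le_trans hi (Nat.le_succ i))
      have h1 := hRgone i q'' q hq''E
      have hqc : q ∈ A.configs e i := hsubconf i (hin i hi)
      by_contra hne'
      exact h1 ⟨hqF, hqc, hne'⟩
    obtain ⟨p, hp0, hpe, hpN⟩ :=
      LWAAProof.exists_finpath A e N q (hsubconf N (hin N le_rfl))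
    have hpath : A.IsPath e (fun i => if i ≤ N then p i else q) := by
      refine ⟨by simp only [Nat.zero_le, if_pos]; exact hp0, fun i => ?_⟩
      by_cases h2 : i + 1 ≤ N
      · have h1 : i ≤ N := le_trans (Nat.le_succ i) h2
        simp only [h1, h2, if_pos]
        exact hpe i h2
      · have hNi : N ≤ i := by omega
        have hq1 : (if i ≤ N then p i else q) = q := by
          by_cases h1 : i ≤ N
          · have hiN : i = N := le_antisymm h1 hNi
            rw [if_pos h1, hiN, hpN]
          · rw [if_neg h1]
        show ((if i ≤ N then p i else q), (if i + 1 ≤ N then p (i+1) else q)) ∈ e i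
        rw [hq1, if_neg h2]
        exact hself i hNi
    have hfin := hacc _ hpath
    have hsubset : Set.Ici N ⊆ {i : ℕ | (if i ≤ N then p i else q) ∈ A.final} := by
      intro i hi
      have hqq : (if i ≤ N then p i else q) = q := by
        by_cases h1 : i ≤ N
        · have hiN : i = N := le_antisymm h1 hi
          rw [if_pos h1, hiN, hpN]
        · rw [if_neg h1]
      show (if i ≤ N then p i else q) ∈ A.final
      rw [hqq]; exact hqF
    exact Set.Ici_infinite N (hfin.subset hsubset)
  obtain ⟨C, hCinf⟩ := Finite.exists_infinite_fiber (LWAAProof.configAux A E')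
  have hCinf' : (LWAAProof.configAux A E' ⁻¹' {C}).Infinite := Set.infinite_coe_iff.mp hCinf
  obtain ⟨k, hk⟩ := hCinf'.nonempty
  have hj : ∀ q : Q, ∃ jq : ℕ, k ≤ jq ∧ (q ∈ A.final → q ∉ LWAAProof.configAux A E' jq) := by
    intro q
    by_cases hq : q ∈ A.final
    · obtain ⟨i, hik, hi⟩ := habsent q hq k
      exact ⟨i, hik, fun _ => hi⟩
    · exact ⟨k, le_rfl, fun h => absurd h hq⟩
  choose j hjk hjq using hj
  obtain ⟨n1, hn1mem, hn1gt⟩ := hCinf'.exists_gt (max k (Finset.univ.sup j))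
  have h2 : k < n1 := lt_of_le_of_lt (le_max_left _ _) hn1gt
  have h3 : Finset.univ.sup j < n1 := lt_of_le_of_lt (le_max_right _ _) hn1gt
  refine ⟨n1 - 1, σ, e', k, fun i _ => hrd i, by omega, ?_, ?_⟩
  · have h1 : n1 - 1 + 1 = n1 := by omega
    rw [hconf, hconf, h1]
    have hkC : LWAAProof.configAux A E' k = C := hk
    have hnC : LWAAProof.configAux A E' n1 = C := hn1mem
    rw [hkC, hnC]
  · intro q hq
    have hjm : j q ≤ Finset.univ.sup j := Finset.le_sup (Finset.mem_univ q)
    refine ⟨j q, hjk q, by omega, ?_⟩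
    rw [hconf]
    exact hjq q hq
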